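/- Let M/K be a nontrivial finite extension obtained by strong general magnification from L/K through J/K, and suppose one of the fields in the unique descending chain of M/K different from both M and K coincides with one of the fields in the unique ascending chain of M/K. Then at least one of the following holds: (1) L/K is primitive; (2) the magnification is nontrivial and J/K is primitive; (3) the magnification is nontrivial, r_K(J) = 1, t_K(L) = 1, the unique ascending chain of J/K terminates at J, and the unique descending chain of L/K terminates at K; (4) the magnification is nontrivial, r_K(L) = 1, t_K(J) = 1, the unique ascending chain of L/K terminates at L, and the unique descending chain of J/K terminates at K. -/

import Mathlib

open IntermediateField Module

section Defs

variable (K Kbar : Type*) [Field K] [Field Kbar] [Algebra K Kbar]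

/-- The Galois closure inside the ambient field `Kbar` of an intermediate field `L` of
`Kbar / K`: the compositum of all the `K`-conjugates of `L` in `Kbar`. -/
noncomputable def galClosure (L : IntermediateField K Kbar) : IntermediateField K Kbar :=
  ⨆ f : ↥L →ₐ[K] Kbar, f.fieldRange

/-- The subgroup `H = Gal(L̃/L)` of `G = Gal(L̃/K)`. -/
noncomputable def fixSub (L : IntermediateField K Kbar) :
    Subgroup (↥(galClosure K Kbar L) ≃ₐ[K] ↥(galClosure K Kbar L)) :=
  (IntermediateField.comap (galClosure K Kbar L).val L).fixingSubgroup

/-- The cluster size `r_K(L) = [N_G(H) : H]`. -/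
noncomputable def clusterSize (L : IntermediateField K Kbar) : ℕ :=
  (fixSub K Kbar L).relIndex
    (Subgroup.normalizer (fixSub K Kbar L : Set (↥(galClosure K Kbar L) ≃ₐ[K] ↥(galClosure K Kbar L))))

/-- The number of clusters `s_K(L) = [G : N_G(H)]`. -/
noncomputable def numClusters (L : IntermediateField K Kbar) : ℕ :=
  (Subgroup.normalizer (fixSub K Kbar L :
      Set (↥(galClosure K Kbar L) ≃ₐ[K] ↥(galClosure K Kbar L)))).index

/-- The ascending index `t_K(L) = [G : H^G]`. -/
noncomputable def ascIndex (L : IntermediateField K Kbar) : ℕ :=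
  (Subgroup.normalClosure (fixSub K Kbar L :
      Set (↥(galClosure K Kbar L) ≃ₐ[K] ↥(galClosure K Kbar L)))).index

/-- The quantity `u_K(L) = [H^G : H]`. -/
noncomputable def uIndex (L : IntermediateField K Kbar) : ℕ :=
  (fixSub K Kbar L).relIndex (Subgroup.normalClosure (fixSub K Kbar L :
      Set (↥(galClosure K Kbar L) ≃ₐ[K] ↥(galClosure K Kbar L))))

/-- `M/K` is obtained by strong cluster magnification from `L/K` through `F/K`. -/
def IsSCMvia (M L F : IntermediateField K Kbar) : Prop :=
  L ≤ M ∧ 2 < Module.finrank K ↥L ∧ FiniteDimensional K ↥F ∧ IsGalois K ↥F ∧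
    galClosure K Kbar L ⊓ F = ⊥ ∧ L ⊔ F = M

/-- `M/K` is primitive: it is not obtained by a nontrivial strong cluster magnification
from any subextension over `K`. -/
def IsPrimitive (M : IntermediateField K Kbar) : Prop :=
  ¬ ∃ L F : IntermediateField K Kbar, IsSCMvia K Kbar M L F ∧ F ≠ ⊥

/-- `M/K` is obtained by strong general magnification from `L/K` through `J/K`. -/
def IsSGMvia (M L J : IntermediateField K Kbar) : Prop :=
  L ≤ M ∧ 1 < Module.finrank K ↥L ∧ FiniteDimensional K ↥J ∧
    galClosure K Kbar L ⊓ galClosure K Kbar J = ⊥ ∧ L ⊔ J = M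

/-- `M/K` is general primitive: not obtained by a nontrivial strong general magnification
from any subextension over `K`. -/
def IsGeneralPrimitive (M : IntermediateField K Kbar) : Prop :=
  ¬ ∃ L J : IntermediateField K Kbar, IsSGMvia K Kbar M L J ∧ J ≠ ⊥

/-- `F/E` is a Galois pair of intermediate fields: `E ≤ F` and `F/E` is Galois. -/
def IsGaloisPair (E F : IntermediateField K Kbar) : Prop :=
  ∃ h : E ≤ F, IsGalois ↥E ↥(IntermediateField.extendScalars h)

/-- One step of the unique descending chain: `N'` is an intermediate field of `N/K` such
that `N/N'` is Galois of maximal possible degree. -/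
def DescStep (N N' : IntermediateField K Kbar) : Prop :=
  N' ≤ N ∧ IsGaloisPair K Kbar N' N ∧
    ∀ N'' : IntermediateField K Kbar, N'' ≤ N → IsGaloisPair K Kbar N'' N →
      Module.finrank K ↥N' ≤ Module.finrank K ↥N''

/-- One step of the unique ascending chain for `L/K`: `F'` is an intermediate field of
`L/F` such that `F'/F` is Galois of maximal possible degree. -/
def AscStep (L F F' : IntermediateField K Kbar) : Prop :=
  F ≤ F' ∧ F' ≤ L ∧ IsGaloisPair K Kbar F F' ∧
    ∀ F'' : IntermediateField K Kbar, F ≤ F'' → F'' ≤ L → IsGaloisPair K Kbar F F'' →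
      Module.finrank K ↥F'' ≤ Module.finrank K ↥F'

/-- `E` occurs in the unique descending chain of `L/K`. -/
def InDescChain (L E : IntermediateField K Kbar) : Prop :=
  Relation.ReflTransGen (DescStep K Kbar) L E

/-- `E` occurs in the unique ascending chain of `L/K`. -/
def InAscChain (L E : IntermediateField K Kbar) : Prop :=
  Relation.ReflTransGen (AscStep K Kbar L) ⊥ E

end Defs

section Helpers

variable {K Kbar : Type*} [Field K] [Field Kbar] [Algebra K Kbar]

theorem mem_map'' {X : IntermediateField K Kbar} {L' : Type*} [Field L'] [Algebra K L']
    {f : Kbar →ₐ[K] L'} {y : L'} : y ∈ X.map f ↔ ∃ x ∈ X, f x = y := by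
  rw [← SetLike.mem_coe, coe_map]
  exact Set.mem_image _ _ _

/-- `map σ X = X` when `σ` fixes `X` pointwise. -/
theorem map_eq_self_of_fixes (X : IntermediateField K Kbar) (σ : Kbar ≃ₐ[K] Kbar)
    (h : ∀ x ∈ X, σ x = x) : X.map ↑σ = X := by
  apply le_antisymm
  · rintro y hy
    obtain ⟨x, hx, rfl⟩ := mem_map''.mp hy
    rw [AlgEquiv.coe_toAlgHom, h x hx]; exact hx
  · intro x hx
    exact mem_map''.mpr ⟨x, hx, by rw [AlgEquiv.coe_toAlgHom, h x hx]⟩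

theorem map_sup' (X Y : IntermediateField K Kbar) {L' : Type*} [Field L'] [Algebra K L']
    (f : Kbar →ₐ[K] L') : (X ⊔ Y).map f = X.map f ⊔ Y.map f :=
  (gc_map_comap f).l_sup

theorem map_bot' {L' : Type*} [Field L'] [Algebra K L'] (f : Kbar →ₐ[K] L') :
    (⊥ : IntermediateField K Kbar).map f = ⊥ := by
  apply le_antisymm
  · rintro y hy
    obtain ⟨x, hx, rfl⟩ := mem_map''.mp hy
    obtain ⟨k, rfl⟩ := mem_bot.mp hx
    exact mem_bot.mpr ⟨k, (f.commutes k).symm⟩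
  · exact bot_le

/-- The stabilizer of an intermediate field inside the automorphism group. -/
def fieldStab (X : IntermediateField K Kbar) : Subgroup (Kbar ≃ₐ[K] Kbar) where
  carrier := {σ | X.map ↑σ = X}
  one_mem' := map_eq_self_of_fixes X 1 (fun _ _ => rfl)
  mul_mem' := by
    intro a b ha hb
    have h2 : X.map (↑(a * b) : Kbar →ₐ[K] Kbar) = (X.map (↑b : Kbar →ₐ[K] Kbar)).map (↑a : Kbar →ₐ[K] Kbar) := by
      rw [map_map]
      congr 1
    rw [Set.mem_setOf_eq, h2, hb, ha]
  inv_mem' := by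
    intro a ha
    rw [Set.mem_setOf_eq] at ha ⊢
    conv_lhs => rw [← ha]
    rw [map_map]
    have h1 : (↑a⁻¹ : Kbar →ₐ[K] Kbar).comp ↑a = (↑(1 : Kbar ≃ₐ[K] Kbar) : Kbar →ₐ[K] Kbar) := by
      ext x; exact a.left_inv x
    rw [h1]
    exact map_eq_self_of_fixes X 1 (fun _ _ => rfl)

theorem mem_fieldStab {X : IntermediateField K Kbar} {σ : Kbar ≃ₐ[K] Kbar} :
    σ ∈ fieldStab X ↔ X.map ↑σ = X := Iff.rfl

end Helpers


section Bridge

variable {K Kbar : Type*} [Field K] [PerfectField K] [Field Kbar] [Algebra K Kbar]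
  [IsAlgClosure K Kbar]

theorem mem_map2 {F L L' : Type*} [Field F] [Field L] [Field L'] [Algebra F L] [Algebra F L']
    {X : IntermediateField F L} {f : L →ₐ[F] L'} {y : L'} :
    y ∈ X.map f ↔ ∃ x ∈ X, f x = y := by
  rw [← SetLike.mem_coe, coe_map]
  exact Set.mem_image _ _ _

/-- Upgrade a `K`-automorphism of `Kbar` fixing `E` pointwise to an `E`-automorphism. -/
def mkE (E : IntermediateField K Kbar) (σ : Kbar ≃ₐ[K] Kbar) (hσ : ∀ x ∈ E, σ x = x) :
    Kbar ≃ₐ[↥E] Kbar :=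
  { σ.toRingEquiv with
    commutes' := fun e => by
      have : (algebraMap ↥E Kbar) e = (e : Kbar) := rfl
      rw [this]
      exact hσ e e.2 }

/-- The key bridge: a Galois pair is the same as stability of `F` under all automorphisms of
`Kbar/K` fixing `E` pointwise. -/
theorem isGaloisPair_iff_stab {E F : IntermediateField K Kbar} (hEF : E ≤ F) :
    IsGaloisPair K Kbar E F ↔
      ∀ σ : Kbar ≃ₐ[K] Kbar, (∀ x ∈ E, σ x = x) → F.map ↑σ = F := by
  haveI hac : IsAlgClosed Kbar := IsAlgClosure.isAlgClosed K
  haveI : IsAlgClosure ↥E Kbar := ⟨hac, inferInstance⟩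
  haveI : Normal ↥E Kbar := IsAlgClosure.normal ↥E Kbar
  haveI : PerfectField ↥E := Algebra.IsAlgebraic.perfectField (K := K) (L := ↥E)
  have main : ∀ σ' : Kbar ≃ₐ[↥E] Kbar,
      ((extendScalars hEF).map ↑σ' = extendScalars hEF ↔
        F.map ↑(σ'.restrictScalars K) = F) := by
    intro σ'
    have hfun : ∀ x : Kbar, (σ'.restrictScalars K) x = σ' x := fun x => rfl
    constructor <;> intro h <;> apply SetLike.ext <;> intro x <;>
      have hx := SetLike.ext_iff.mp h x <;>
      simp only [mem_map2, mem_extendScalars, AlgHom.coe_coe, hfun] at hx ⊢ <;> exact hx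
  constructor
  · rintro ⟨h, hgal⟩ σ hσ
    have hn : Normal ↥E ↥(extendScalars hEF) := hgal.to_normal
    have hstab := (normal_iff_forall_map_eq' (F := ↥E) (L := Kbar)
      (K := extendScalars hEF)).mp hn
    have h2 := (main (mkE E σ hσ)).mp (hstab (mkE E σ hσ))
    have : ((mkE E σ hσ).restrictScalars K : Kbar →ₐ[K] Kbar) = (↑σ : Kbar →ₐ[K] Kbar) := by
      ext x; rfl
    rwa [this] at h2
  · intro hst
    refine ⟨hEF, ?_⟩
    haveI sep : Algebra.IsSeparable ↥E ↥(extendScalars hEF) := inferInstance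
    refine { to_isSeparable := sep, to_normal := ?_ }
    apply (normal_iff_forall_map_eq' (F := ↥E) (L := Kbar) (K := extendScalars hEF)).mpr
    intro σ'
    apply (main σ').mpr
    apply hst
    intro x hx
    have := σ'.commutes ⟨x, hx⟩
    simpa using this

end Bridge

section Descent

variable {K Kbar : Type*} [Field K] [Field Kbar] [Algebra K Kbar]

/-- Membership in the comap along the inclusion of an intermediate field. -/
theorem mem_down {Ω X : IntermediateField K Kbar} {x : ↥Ω} :
    x ∈ X.comap Ω.val ↔ (x : Kbar) ∈ X := Iff.rfl

theorem up_down {Ω X : IntermediateField K Kbar} (hX : X ≤ Ω) :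
    (X.comap Ω.val).map Ω.val = X := by
  apply le_antisymm
  · rintro y hy
    obtain ⟨x, hx, rfl⟩ := mem_map2.mp hy
    exact hx
  · intro x hx
    exact mem_map2.mpr ⟨⟨x, hX hx⟩, hx, rfl⟩

theorem down_inf {Ω X Y : IntermediateField K Kbar} :
    (X ⊓ Y).comap Ω.val = X.comap Ω.val ⊓ Y.comap Ω.val := rfl

theorem down_bot {Ω : IntermediateField K Kbar} :
    (⊥ : IntermediateField K Kbar).comap Ω.val = ⊥ := by
  apply le_antisymm
  · intro x hx
    obtain ⟨k, hk⟩ := mem_bot.mp (mem_down.mp hx)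
    refine mem_bot.mpr ⟨k, ?_⟩
    apply Subtype.ext
    exact hk
  · exact bot_le

theorem down_sup {Ω X Y : IntermediateField K Kbar} (hX : X ≤ Ω) (hY : Y ≤ Ω) :
    (X ⊔ Y).comap Ω.val = X.comap Ω.val ⊔ Y.comap Ω.val := by
  apply le_antisymm
  · intro x hx
    have hx' : (x : Kbar) ∈ X ⊔ Y := mem_down.mp hx
    rw [← up_down hX, ← up_down hY, ← map_sup'] at hx'
    obtain ⟨y, hy, hyx⟩ := mem_map2.mp hx'
    have : y = x := Subtype.ext hyx
    rwa [← this]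
  · exact sup_le ((gc_map_comap Ω.val).monotone_u le_sup_left)
      ((gc_map_comap Ω.val).monotone_u le_sup_right)

/-- Transport an intermediate field below `Ω` to an intermediate field of `Ω`. -/
def downEquiv {Ω X : IntermediateField K Kbar} (hX : X ≤ Ω) :
    ↥(X.comap Ω.val) ≃ₐ[K] ↥X where
  toFun x := ⟨(x : ↥Ω), x.2⟩
  invFun x := ⟨⟨(x : Kbar), hX x.2⟩, x.2⟩
  left_inv x := rfl
  right_inv x := rfl
  map_add' x y := rfl
  map_mul' x y := rfl
  commutes' k := rfl

theorem finrank_down {Ω X : IntermediateField K Kbar} (hX : X ≤ Ω) :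
    Module.finrank K ↥(X.comap Ω.val) = Module.finrank K ↥X :=
  (downEquiv hX).toLinearEquiv.finrank_eq

theorem isGalois_down {Ω X : IntermediateField K Kbar} (hX : X ≤ Ω) [IsGalois K ↥X] :
    IsGalois K ↥(X.comap Ω.val) :=
  IsGalois.of_algEquiv (downEquiv hX).symm

end Descent

section FTG

variable {F E : Type*} [Field F] [Field E] [Algebra F E]

theorem mem_fixedField_iff' {H : Subgroup (E ≃ₐ[F] E)} {x : E} :
    x ∈ IntermediateField.fixedField H ↔ ∀ g ∈ H, g x = x := by
  constructor
  · intro hx g hg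
    exact hx ⟨g, hg⟩
  · intro h g
    exact h g g.2

theorem fixing_anti {X Y : IntermediateField F E} (h : X ≤ Y) :
    Y.fixingSubgroup ≤ X.fixingSubgroup := fun σ hσ =>
  (mem_fixingSubgroup_iff X σ).mpr fun x hx =>
    (mem_fixingSubgroup_iff Y σ).mp hσ x (h hx)

theorem fixedField_sup {S T : Subgroup (E ≃ₐ[F] E)} :
    IntermediateField.fixedField (S ⊔ T) =
      IntermediateField.fixedField S ⊓ IntermediateField.fixedField T := by
  apply le_antisymm
  · intro x hx
    rw [mem_fixedField_iff'] at hx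
    exact ⟨mem_fixedField_iff'.mpr fun g hg => hx g (le_sup_left (a := S) (b := T) hg),
      mem_fixedField_iff'.mpr fun g hg => hx g (le_sup_right (a := S) (b := T) hg)⟩
  · intro x hx
    rw [mem_fixedField_iff']
    intro g hg
    let Stx : Subgroup (E ≃ₐ[F] E) :=
      { carrier := {g | g x = x}
        one_mem' := rfl
        mul_mem' := fun {u v} hu hv => by
          show u (v x) = x
          rw [show v x = x from hv, show u x = x from hu]
        inv_mem' := fun {u} hu => by
          show u⁻¹ x = x
          conv_lhs => rw [← show u x = x from hu]
          exact u.left_inv x }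
    have : S ⊔ T ≤ Stx := sup_le (fun g hg => mem_fixedField_iff'.mp hx.1 g hg)
      (fun g hg => mem_fixedField_iff'.mp hx.2 g hg)
    exact this hg

theorem fixing_sup {X Y : IntermediateField F E} :
    (X ⊔ Y).fixingSubgroup = X.fixingSubgroup ⊓ Y.fixingSubgroup := by
  apply le_antisymm
  · exact le_inf (fixing_anti le_sup_left) (fixing_anti le_sup_right)
  · intro σ hσ
    apply (mem_fixingSubgroup_iff (X ⊔ Y) σ).mpr
    intro x hx
    have : X ⊔ Y ≤ IntermediateField.fixedField (X.fixingSubgroup ⊓ Y.fixingSubgroup) := by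
      apply sup_le
      · exact (IntermediateField.le_iff_le _ _).mpr inf_le_left
      · exact (IntermediateField.le_iff_le _ _).mpr inf_le_right
    exact mem_fixedField_iff'.mp (this hx) σ hσ

theorem fixing_bot' : (⊥ : IntermediateField F E).fixingSubgroup = ⊤ := by
  rw [eq_top_iff]
  intro σ _
  apply (mem_fixingSubgroup_iff _ σ).mpr
  intro x hx
  obtain ⟨k, rfl⟩ := IntermediateField.mem_bot.mp hx
  exact σ.commutes k

variable [FiniteDimensional F E] [IsGalois F E]

theorem fixing_inf {X Y : IntermediateField F E} :
    (X ⊓ Y).fixingSubgroup = X.fixingSubgroup ⊔ Y.fixingSubgroup := by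
  conv_lhs => rw [← IsGalois.fixedField_fixingSubgroup X, ← IsGalois.fixedField_fixingSubgroup Y,
    ← fixedField_sup, IntermediateField.fixingSubgroup_fixedField]

theorem eq_bot_of_fixing_eq_top {X : IntermediateField F E}
    (h : X.fixingSubgroup = ⊤) : X = ⊥ := by
  rw [← IsGalois.fixedField_fixingSubgroup X, h, ← fixing_bot' (F := F) (E := E),
    IsGalois.fixedField_fixingSubgroup]

end FTG

/-- Pure group theory kernel. -/
theorem grp_lemma {G : Type*} [Group G] {a b f l : Subgroup G} [hb : b.Normal]
    (h1 : a ⊔ f = ⊤) (h2 : l ⊔ b = ⊤) (h3 : l ≤ a) (h4 : l ≤ f) :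
    (a ⊓ b) ⊔ f = ⊤ := by
  have ha : a ≤ (a ⊓ b) ⊔ f := by
    intro x hx
    have hx2 : x ∈ (↑(l ⊔ b) : Set G) := by rw [h2]; trivial
    rw [Subgroup.mul_normal] at hx2
    obtain ⟨p, hp, q, hq, rfl⟩ := hx2
    have hqa : q ∈ a := by
      have : q = p⁻¹ * (p * q) := by group
      rw [this]
      exact a.mul_mem (a.inv_mem (h3 hp)) hx
    exact Subgroup.mul_mem _ (Subgroup.mem_sup_right (h4 hp))
      (Subgroup.mem_sup_left (⟨hqa, hq⟩ : q ∈ a ⊓ b))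
  rw [eq_top_iff, ← h1]
  exact sup_le ha le_sup_right

section OmegaDescent

variable {K Kbar : Type*} [Field K] [Field Kbar] [Algebra K Kbar] [Normal K Kbar]
variable {Ω : IntermediateField K Kbar} [Normal K ↥Ω]

theorem res_apply (σ : Kbar ≃ₐ[K] Kbar) (x : ↥Ω) :
    ((AlgEquiv.restrictNormalHom ↥Ω σ) x : Kbar) = σ (x : Kbar) :=
  AlgEquiv.restrictNormal_commutes σ ↥Ω x

theorem map_res_fixing {X : IntermediateField K Kbar} (hX : X ≤ Ω) :
    Subgroup.map (AlgEquiv.restrictNormalHom ↥Ω) X.fixingSubgroup =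
      (X.comap Ω.val).fixingSubgroup := by
  apply le_antisymm
  · rintro τ hτ
    obtain ⟨σ, hσ, rfl⟩ := hτ
    apply (mem_fixingSubgroup_iff _ _).mpr
    intro y hy
    apply Subtype.ext
    rw [res_apply]
    exact (mem_fixingSubgroup_iff X σ).mp hσ _ (mem_down.mp hy)
  · intro τ hτ
    obtain ⟨σ, rfl⟩ := AlgEquiv.restrictNormalHom_surjective Kbar τ
    refine ⟨σ, ?_, rfl⟩
    apply (mem_fixingSubgroup_iff X σ).mpr
    intro x hx
    have h1 : σ ((⟨x, hX hx⟩ : ↥Ω) : Kbar) =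
        ((AlgEquiv.restrictNormalHom ↥Ω σ) ⟨x, hX hx⟩ : Kbar) := (res_apply σ _).symm
    have h2 : (AlgEquiv.restrictNormalHom ↥Ω σ) ⟨x, hX hx⟩ = ⟨x, hX hx⟩ :=
      (mem_fixingSubgroup_iff _ _).mp hτ ⟨x, hX hx⟩ (mem_down.mpr hx)
    simpa [h2] using h1

theorem ker_res_fixes (δ : Kbar ≃ₐ[K] Kbar)
    (hδ : AlgEquiv.restrictNormalHom ↥Ω δ = 1) : ∀ x ∈ Ω, δ x = x := by
  intro x hx
  have := res_apply δ ⟨x, hx⟩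
  rw [hδ] at this
  exact this.symm

variable [FiniteDimensional K ↥Ω] [IsGalois K ↥Ω]

/-- Intersection-stability: if `M` is stable under everything fixing `A` and everything
fixing `B`, it is stable under everything fixing `A ⊓ B`. -/
theorem stab_inf {A B M : IntermediateField K Kbar} (hA : A ≤ Ω) (hB : B ≤ Ω) (hM : M ≤ Ω)
    (sA : ∀ σ : Kbar ≃ₐ[K] Kbar, (∀ x ∈ A, σ x = x) → M.map ↑σ = M)
    (sB : ∀ σ : Kbar ≃ₐ[K] Kbar, (∀ x ∈ B, σ x = x) → M.map ↑σ = M) :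
    ∀ σ : Kbar ≃ₐ[K] Kbar, (∀ x ∈ A ⊓ B, σ x = x) → M.map ↑σ = M := by
  intro σ hσ
  have hres : AlgEquiv.restrictNormalHom ↥Ω σ ∈ ((A ⊓ B).comap Ω.val).fixingSubgroup := by
    apply (mem_fixingSubgroup_iff _ _).mpr
    intro y hy
    apply Subtype.ext
    rw [res_apply]
    exact hσ _ (mem_down.mp hy)
  rw [down_inf, fixing_inf, ← map_res_fixing hA, ← map_res_fixing hB, ← Subgroup.map_sup]
    at hres
  obtain ⟨τ, hτ, hτσ⟩ := hres
  have hδ : AlgEquiv.restrictNormalHom ↥Ω (τ⁻¹ * σ) = 1 := by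
    rw [map_mul, map_inv, hτσ]
    group
  have hfix := ker_res_fixes (Ω := Ω) _ hδ
  have hmapδ : M.map (↑(τ⁻¹ * σ) : Kbar →ₐ[K] Kbar) = M := map_eq_self_of_fixes M _ (fun x hx => hfix x (hM hx))
  have hsplit : M.map (↑σ : Kbar →ₐ[K] Kbar) = (M.map (↑(τ⁻¹ * σ) : Kbar →ₐ[K] Kbar)).map (↑τ : Kbar →ₐ[K] Kbar) := by
    rw [map_map]
    congr 1
    ext x
    show σ x = τ (τ.symm (σ x))
    exact (τ.apply_symm_apply (σ x)).symm
  rw [hsplit, hmapδ]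
  have hτS : τ ∈ fieldStab M := by
    have : A.fixingSubgroup ⊔ B.fixingSubgroup ≤ fieldStab M := by
      apply sup_le
      · intro g hg
        exact mem_fieldStab.mpr (sA g ((mem_fixingSubgroup_iff A g).mp hg))
      · intro g hg
        exact mem_fieldStab.mpr (sB g ((mem_fixingSubgroup_iff B g).mp hg))
    exact this hτ
  exact mem_fieldStab.mp hτS

/-- The key linear-disjointness lemma. -/
theorem disj_lemma {X Y Z W : IntermediateField K Kbar}
    (hX : X ≤ Ω) (hY : Y ≤ Ω) (hZ : Z ≤ Ω) (hW : W ≤ Ω) [IsGalois K ↥Y]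
    (h1 : X ⊓ Z = ⊥) (h2 : W ⊓ Y = ⊥) (h3 : X ≤ W) (h4 : Z ≤ W) :
    (X ⊔ Y) ⊓ Z = ⊥ := by
  haveI : IsGalois K ↥(Y.comap Ω.val) := isGalois_down hY
  haveI : (Y.comap Ω.val).fixingSubgroup.Normal :=
    IsGalois.fixingSubgroup_normal_of_isGalois _
  set a := (X.comap Ω.val).fixingSubgroup
  set b := (Y.comap Ω.val).fixingSubgroup
  set f := (Z.comap Ω.val).fixingSubgroup
  set l := (W.comap Ω.val).fixingSubgroup
  have ha1 : a ⊔ f = ⊤ := by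
    rw [← fixing_inf, ← down_inf, h1, down_bot, fixing_bot']
  have ha2 : l ⊔ b = ⊤ := by
    rw [← fixing_inf, ← down_inf, h2, down_bot, fixing_bot']
  have ha3 : l ≤ a := fixing_anti ((gc_map_comap Ω.val).monotone_u h3)
  have ha4 : l ≤ f := fixing_anti ((gc_map_comap Ω.val).monotone_u h4)
  have key : (a ⊓ b) ⊔ f = ⊤ := grp_lemma ha1 ha2 ha3 ha4
  have hdown : ((X ⊔ Y) ⊓ Z).comap Ω.val = ⊥ := by
    apply eq_bot_of_fixing_eq_top
    rw [down_inf, fixing_inf, down_sup hX hY, fixing_sup]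
    exact key
  have := congrArg (fun (S : IntermediateField K ↥Ω) => S.map Ω.val) hdown
  simpa [up_down (le_trans inf_le_right hZ), map_bot'] using this

end OmegaDescent

/-- Let `M/K` be a nontrivial finite extension obtained by strong general
magnification from `L/K` through `J/K`, and suppose one of the fields in the unique descending
chain of `M/K` different from both `M` and `K` coincides with one of the fields in the unique
ascending chain of `M/K`.  Then at least one of the four listed alternatives holds. -/
theorem strong_general_magnification_chain_coincidence
    (K Kbar : Type*) [Field K] [PerfectField K] [Field Kbar] [Algebra K Kbar]
    [IsAlgClosure K Kbar]
    (M L J : IntermediateField K Kbar) [FiniteDimensional K ↥M] (hM : M ≠ ⊥)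
    (hSGM : IsSGMvia K Kbar M L J)
    (E : IntermediateField K Kbar) (hEM : E ≠ M) (hEK : E ≠ ⊥)
    (hdesc : InDescChain K Kbar M E) (hasc : InAscChain K Kbar M E) :
    IsPrimitive K Kbar L ∨
    (J ≠ ⊥ ∧ IsPrimitive K Kbar J) ∨
    (J ≠ ⊥ ∧ clusterSize K Kbar J = 1 ∧ ascIndex K Kbar L = 1 ∧
      InAscChain K Kbar J J ∧ InDescChain K Kbar L ⊥) ∨
    (J ≠ ⊥ ∧ clusterSize K Kbar L = 1 ∧ ascIndex K Kbar J = 1 ∧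
      InAscChain K Kbar L L ∧ InDescChain K Kbar J ⊥) := by
  haveI : Normal K Kbar := IsAlgClosure.normal K Kbar
  have gal_eq : ∀ X : IntermediateField K Kbar,
      galClosure K Kbar X = normalClosure K (↥X) Kbar := fun _ => rfl
  set Ω : IntermediateField K Kbar := normalClosure K (↥M) Kbar with hΩdef
  haveI : FiniteDimensional K ↥Ω := normalClosure.is_finiteDimensional K ↥M Kbar
  haveI : Normal K ↥Ω := normalClosure.normal K ↥M Kbar
  haveI : IsGalois K ↥Ω := ⟨⟩
  by_cases hP : IsPrimitive K Kbar L
  · exact Or.inl hP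
  exfalso
  obtain ⟨L₁, F₁, hscm, hF₁⟩ := not_not.mp hP
  obtain ⟨hL₁L, hrank, hFD₁, hGal₁, hdisj₁, hsup₁⟩ := hscm
  obtain ⟨hLM, hrankL, hFDJ, hdisjLJ, hsupLJ⟩ := hSGM
  have hJM : J ≤ M := le_sup_right.trans hsupLJ.le
  have hF₁L : F₁ ≤ L := hsup₁ ▸ le_sup_right
  set L₀ := L₁ ⊔ J with hL₀
  have hL₀M : L₀ ≤ M := sup_le (hL₁L.trans hLM) hJM
  have hF₁M : F₁ ≤ M := hF₁L.trans hLM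
  have hsupM : L₀ ⊔ F₁ = M := by rw [hL₀, sup_right_comm, hsup₁, hsupLJ]
  have hMΩ : M ≤ Ω := le_normalClosure M
  have hgLΩ : galClosure K Kbar L ≤ Ω := by
    rw [gal_eq]; exact normalClosure_mono L M hLM
  have hgJΩ : galClosure K Kbar J ≤ Ω := by
    rw [gal_eq]; exact normalClosure_mono J M hJM
  have hgL₁gL : galClosure K Kbar L₁ ≤ galClosure K Kbar L := by
    rw [gal_eq, gal_eq]; exact normalClosure_mono L₁ L hL₁L
  have hgL₁Ω : galClosure K Kbar L₁ ≤ Ω := hgL₁gL.trans hgLΩ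
  have hF₁gL : F₁ ≤ galClosure K Kbar L := hF₁L.trans (le_normalClosure L)
  have hF₁Ω : F₁ ≤ Ω := hF₁gL.trans hgLΩ
  haveI : Normal K ↥(galClosure K Kbar J) := normalClosure.normal K ↥J Kbar
  haveI : IsGalois K ↥(galClosure K Kbar J) := ⟨⟩
  -- the disjointness for the new magnification of `M`
  have hD : (galClosure K Kbar L₁ ⊔ galClosure K Kbar J) ⊓ F₁ = ⊥ :=
    disj_lemma (Ω := Ω) hgL₁Ω hgJΩ hF₁Ω hgLΩ hdisj₁ hdisjLJ hgL₁gL hF₁gL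
  haveI : Normal K ↥(galClosure K Kbar L₁) := normalClosure.normal K ↥L₁ Kbar
  haveI : Normal K ↥(galClosure K Kbar L₁ ⊔ galClosure K Kbar J) := inferInstance
  have hgL₀ : galClosure K Kbar L₀ ≤ galClosure K Kbar L₁ ⊔ galClosure K Kbar J := by
    rw [gal_eq]
    exact normalClosure_le_iff_of_normal.mpr
      (sup_le_sup (le_normalClosure L₁) (le_normalClosure J))
  have hdisj₀ : galClosure K Kbar L₀ ⊓ F₁ = ⊥ :=
    le_bot_iff.mp (le_trans (inf_le_inf_right _ hgL₀) hD.le)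
  have hNF₁ : Normal K ↥F₁ := hGal₁.to_normal
  have sL₀ : ∀ σ : Kbar ≃ₐ[K] Kbar, (∀ x ∈ L₀, σ x = x) → M.map ↑σ = M := by
    intro σ hσ
    rw [← hsupM, map_sup', map_eq_self_of_fixes L₀ σ hσ,
      normal_iff_forall_map_eq'.mp hNF₁ σ]
  have hfd : ∀ X : IntermediateField K Kbar, X ≤ M → FiniteDimensional K ↥X := fun X hX =>
    FiniteDimensional.of_injective (IntermediateField.inclusion hX).toLinearMap
      (IntermediateField.inclusion_injective hX)
  -- every member of the descending chain other than `M` lies below `L₀`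
  have hdescL₀ : ∀ Z, Relation.ReflTransGen (DescStep K Kbar) M Z → Z = M ∨ Z ≤ L₀ := by
    intro Z h
    induction h with
    | refl => exact Or.inl rfl
    | @tail b c hb hbc ih =>
      rcases ih with hbM | hble
      · rw [hbM] at hbc
        obtain ⟨hcM, hpair, hmin⟩ := hbc
        right
        have sc := (isGaloisPair_iff_stab hcM).mp hpair
        have sInf := stab_inf (Ω := Ω) (hcM.trans hMΩ) (hL₀M.trans hMΩ) hMΩ sc sL₀
        have hpair' : IsGaloisPair K Kbar (c ⊓ L₀) M :=
          (isGaloisPair_iff_stab (le_trans inf_le_left hcM)).mpr sInf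
        have hrank2 := hmin (c ⊓ L₀) (le_trans inf_le_left hcM) hpair'
        haveI := hfd c hcM
        have heq : c ⊓ L₀ = c := eq_of_le_of_finrank_le inf_le_left hrank2
        rw [← heq]
        exact inf_le_right
      · exact Or.inr (hbc.1.trans hble)
  have hEL₀ : E ≤ L₀ := (hdescL₀ E hdesc).resolve_left hEM
  -- every member of the ascending chain other than `⊥` lies above `F₁`
  have hascF₁ : ∀ Z, Relation.ReflTransGen (AscStep K Kbar M) ⊥ Z → Z = ⊥ ∨ F₁ ≤ Z := by
    intro Z h
    induction h with
    | refl => exact Or.inl rfl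
    | @tail b c hb hbc ih =>
      rcases ih with hbB | hble
      · rw [hbB] at hbc
        obtain ⟨h1, h2, h3, h4⟩ := hbc
        right
        have sc := (isGaloisPair_iff_stab (bot_le : ⊥ ≤ c)).mp h3
        have spair : IsGaloisPair K Kbar ⊥ (c ⊔ F₁) := by
          apply (isGaloisPair_iff_stab bot_le).mpr
          intro σ hσ
          rw [map_sup', sc σ hσ, normal_iff_forall_map_eq'.mp hNF₁ σ]
        have hrank2 := h4 (c ⊔ F₁) bot_le (sup_le h2 hF₁M) spair
        haveI := hfd (c ⊔ F₁) (sup_le h2 hF₁M)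
        have heq : c = c ⊔ F₁ := eq_of_le_of_finrank_le le_sup_left hrank2
        exact le_sup_right.trans heq.symm.le
      · exact Or.inr (hble.trans hbc.1)
  have hF₁E : F₁ ≤ E := (hascF₁ E hasc).resolve_left hEK
  have hcon : F₁ ≤ ⊥ := by
    rw [← hdisj₀]
    exact le_inf ((hF₁E.trans hEL₀).trans (le_normalClosure L₀)) le_rfl
  exact hF₁ (le_bot_iff.mp hcon)
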